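/- Let Q : ℝᵈ × ℝᵈ → ℝᵈ be a nonzero symmetric bilinear map such that the trilinear form (x,y,z) ↦ ⟨Q(x,y), z⟩ is symmetric under all permutations of (x,y,z). Then there exists z ∈ ℝᵈ with z ≠ 0 and Q(z,z) = z. -/

import Mathlib

open scoped InnerProductSpace

set_option maxHeartbeats 1000000 in
/-- If `Q : ℝᵈ × ℝᵈ → ℝᵈ` is a nonzero symmetric bilinear map whose associated
cubic form `⟨Q(x,y),z⟩` is fully symmetric, then there exists `z ≠ 0` with
`Q(z,z) = z`. -/
theorem stmt7 {d : ℕ}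
    (Q : EuclideanSpace ℝ (Fin d) →ₗ[ℝ] EuclideanSpace ℝ (Fin d) →ₗ[ℝ]
      EuclideanSpace ℝ (Fin d))
    (hQ : Q ≠ 0)
    (hsym : ∀ x y, Q x y = Q y x)
    (htri : ∀ x y z, ⟪Q x y, z⟫_ℝ = ⟪Q y z, x⟫_ℝ) :
    ∃ z : EuclideanSpace ℝ (Fin d), z ≠ 0 ∧ Q z z = z := by
  classical
  set E := EuclideanSpace ℝ (Fin d)
  -- trilinear symmetry helpers
  have hT1 : ∀ x y : E, ⟪Q x y, x⟫_ℝ = ⟪Q x x, y⟫_ℝ := by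
    intro x y
    rw [hsym x y, htri y x x]
  have hT2 : ∀ x y : E, ⟪Q x y, y⟫_ℝ = ⟪Q y y, x⟫_ℝ := by
    intro x y
    rw [htri x y y]
  -- Step 1: the cubic form is not identically zero.
  have hcube : ∃ x : E, ⟪Q x x, x⟫_ℝ ≠ 0 := by
    by_contra hc
    push_neg at hc
    -- first, the quadratic-linear form A x y = ⟪Q x x, y⟫ vanishes
    have hA : ∀ x y : E, ⟪Q x x, y⟫_ℝ + ⟪Q y y, x⟫_ℝ = 0 := by
      intro x y
      have h := hc (x + y)
      simp only [map_add, LinearMap.add_apply, inner_add_left, inner_add_right] at h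
      rw [hsym y x, hc x, hc y, hT1 x y, hT2 x y] at h
      linarith
    have hA' : ∀ x y : E, ⟪Q x x, y⟫_ℝ = 0 := by
      intro x y
      have h1 := hA x y
      have h2 := hA x (-y)
      simp only [map_neg, LinearMap.neg_apply, inner_neg_left, inner_neg_right, neg_neg] at h2
      -- h2 : -⟪Q x x, y⟫ + ⟪Q y y, x⟫ = 0
      linarith
    have hQxx : ∀ x : E, Q x x = 0 := by
      intro x
      have := hA' x (Q x x)
      rwa [real_inner_comm, inner_self_eq_zero] at this
    apply hQ
    refine LinearMap.ext fun x => LinearMap.ext fun y => ?_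
    show Q x y = 0
    have h := hQxx (x + y)
    simp only [map_add, LinearMap.add_apply] at h
    rw [hQxx x, hQxx y, hsym y x] at h
    have : (2 : ℝ) • Q x y = 0 := by
      rw [two_smul]
      simpa using h
    simpa using (smul_eq_zero.mp this).resolve_left (by norm_num)
  obtain ⟨x₀, hx₀⟩ := hcube
  -- WLOG the cubic form is positive at some point
  have hpos : ∃ x : E, 0 < ⟪Q x x, x⟫_ℝ := by
    rcases lt_or_gt_of_ne hx₀ with h | h
    · refine ⟨-x₀, ?_⟩
      simp only [map_neg, LinearMap.neg_apply, inner_neg_left, inner_neg_right, neg_neg]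
      linarith
    · exact ⟨x₀, h⟩
  obtain ⟨x₁, hx₁⟩ := hpos
  have hx₁ne : x₁ ≠ 0 := by
    rintro rfl
    simp at hx₁
  -- homogeneity of the cubic form
  have hhom : ∀ (s : ℝ) (x : E), ⟪Q (s • x) (s • x), s • x⟫_ℝ = s ^ 3 * ⟪Q x x, x⟫_ℝ := by
    intro s x
    simp only [map_smul, LinearMap.smul_apply, inner_smul_left, inner_smul_right,
      RCLike.conj_to_real, conj_trivial]
    ring
  -- maximize on the unit sphere
  have hsph : IsCompact (Metric.sphere (0 : E) 1) := isCompact_sphere 0 1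
  have hne : (Metric.sphere (0 : E) 1).Nonempty := by
    refine ⟨‖x₁‖⁻¹ • x₁, ?_⟩
    simp [norm_smul, norm_ne_zero_iff.mpr hx₁ne, abs_of_nonneg (inv_nonneg.mpr (norm_nonneg x₁)),
      inv_mul_cancel₀ (norm_ne_zero_iff.mpr hx₁ne)]
  -- continuous bilinear version of Q
  let B : E →L[ℝ] E →L[ℝ] E :=
    LinearMap.toContinuousLinearMap
      ((LinearMap.toContinuousLinearMap :
        (E →ₗ[ℝ] E) ≃ₗ[ℝ] (E →L[ℝ] E)).toLinearMap ∘ₗ Q)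
  have hB : ∀ x y : E, B x y = Q x y := fun x y => rfl
  have hcont : Continuous fun x : E => ⟪Q x x, x⟫_ℝ := by
    have h1 : Continuous fun x : E => B x x :=
      (B.isBoundedBilinearMap.continuous).comp (continuous_id.prodMk continuous_id)
    exact h1.inner continuous_id
  obtain ⟨u, humem, hmax⟩ := hsph.exists_isMaxOn hne hcont.continuousOn
  have hun : ‖u‖ = 1 := by simpa using humem
  have hune : u ≠ 0 := by
    intro h; rw [h] at hun; simp at hun
  -- the max value is positive
  have hMpos : 0 < ⟪Q u u, u⟫_ℝ := by
    have hmem' : ‖x₁‖⁻¹ • x₁ ∈ Metric.sphere (0 : E) 1 := by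
      simp [norm_smul, abs_of_nonneg (inv_nonneg.mpr (norm_nonneg x₁)),
        inv_mul_cancel₀ (norm_ne_zero_iff.mpr hx₁ne)]
    have hle := hmax hmem'
    have : 0 < ⟪Q (‖x₁‖⁻¹ • x₁) (‖x₁‖⁻¹ • x₁), ‖x₁‖⁻¹ • x₁⟫_ℝ := by
      rw [hhom]
      have h1 : 0 < ‖x₁‖⁻¹ := by
        have h0 : 0 < ‖x₁‖ := (norm_pos_iff (E := E)).mpr hx₁ne
        exact inv_pos.mpr h0
      exact mul_pos (pow_pos h1 3) hx₁
    exact lt_of_lt_of_le this hle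
  -- Lagrange multipliers
  have hextr : IsLocalExtrOn (fun x : E => ⟪Q x x, x⟫_ℝ)
      {x : E | ⟪x, x⟫_ℝ = ⟪u, u⟫_ℝ} u := by
    have hset : {x : E | ⟪x, x⟫_ℝ = ⟪u, u⟫_ℝ} = Metric.sphere (0 : E) 1 := by
      ext x
      simp only [Set.mem_setOf_eq, mem_sphere_iff_norm, mem_sphere_zero_iff_norm, sub_zero]
      rw [real_inner_self_eq_norm_sq, real_inner_self_eq_norm_sq, hun]
      constructor
      · intro h
        nlinarith [norm_nonneg x]
      · intro h; simp [h]
    rw [hset]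
    exact Or.inr (hmax.filter_mono inf_le_right)
  -- strict derivatives
  have hfderiv : HasStrictFDerivAt (fun x : E => ⟪x, x⟫_ℝ)
      ((fderivInnerCLM ℝ ((id u : E), (id u : E))).comp
        ((ContinuousLinearMap.id ℝ E).prod (ContinuousLinearMap.id ℝ E))) u :=
    (hasStrictFDerivAt_id u).inner ℝ (hasStrictFDerivAt_id u)
  have hFB : HasStrictFDerivAt (fun x : E => B x x)
      (B.precompR E (id u) (ContinuousLinearMap.id ℝ E)
        + B.precompL E (ContinuousLinearMap.id ℝ E) (id u)) u :=
    B.hasStrictFDerivAt_of_bilinear (hasStrictFDerivAt_id u) (hasStrictFDerivAt_id u)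
  have hcderiv : HasStrictFDerivAt (fun x : E => ⟪Q x x, x⟫_ℝ)
      ((fderivInnerCLM ℝ ((fun x : E => B x x) u, (id u : E))).comp
        ((B.precompR E (id u) (ContinuousLinearMap.id ℝ E)
          + B.precompL E (ContinuousLinearMap.id ℝ E) (id u)).prod
            (ContinuousLinearMap.id ℝ E))) u := by
    have := hFB.inner ℝ (hasStrictFDerivAt_id u)
    exact this
  obtain ⟨a, b, hab, heq⟩ :=
    hextr.exists_multipliers_of_hasStrictFDerivAt_1d hfderiv hcderiv
  -- evaluate the multiplier identity
  have hkey : ∀ h : E, 2 * a * ⟪u, h⟫_ℝ + 3 * b * ⟪Q u u, h⟫_ℝ = 0 := by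
    intro h
    have := DFunLike.congr_fun heq h
    simp only [ContinuousLinearMap.add_apply, ContinuousLinearMap.smul_apply,
      ContinuousLinearMap.comp_apply, ContinuousLinearMap.prod_apply,
      ContinuousLinearMap.id_apply, ContinuousLinearMap.zero_apply,
      fderivInnerCLM_apply, ContinuousLinearMap.precompR_apply,
      ContinuousLinearMap.precompL_apply, ContinuousLinearMap.flip_apply,
      smul_eq_mul, id_eq] at this
    have e1 : ((ContinuousLinearMap.compL ℝ E E E (B u)) (ContinuousLinearMap.id ℝ E)) h
        = B u h := rfl
    rw [e1] at this
    have hBQ : (B u h : E) = Q u h := rfl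
    have hBQ2 : (B h u : E) = Q h u := rfl
    have h3 : ⟪(B u h : E) + B h u, u⟫_ℝ = 2 * ⟪Q u u, h⟫_ℝ := by
      rw [inner_add_left, hBQ, hBQ2, hsym h u, hT1 u h]
      ring
    rw [h3] at this
    have hBuu : ⟪(B u u : E), h⟫_ℝ = ⟪Q u u, h⟫_ℝ := rfl
    rw [hBuu] at this
    have hc2 : ⟪u, h⟫_ℝ = ⟪h, u⟫_ℝ := (real_inner_comm u h).symm
    rw [hc2] at this ⊢
    linarith
  have hvec : (2 * a) • u + (3 * b) • Q u u = 0 := by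
    have h := hkey ((2 * a) • u + (3 * b) • Q u u)
    rw [inner_add_right, inner_add_right, inner_smul_right, inner_smul_right,
      inner_smul_right, inner_smul_right] at h
    have : ⟪(2 * a) • u + (3 * b) • Q u u, (2 * a) • u + (3 * b) • Q u u⟫_ℝ = 0 := by
      rw [inner_add_left, inner_smul_left, inner_smul_left, inner_add_right, inner_add_right,
        inner_smul_right, inner_smul_right, inner_smul_right, inner_smul_right]
      simp only [RCLike.conj_to_real, conj_trivial]
      nlinarith [real_inner_comm u (Q u u)]
    exact inner_self_eq_zero.mp this
  have hbne : b ≠ 0 := by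
    intro hb
    rw [hb] at hvec
    simp only [mul_zero, zero_smul, add_zero] at hvec
    have ha : a = 0 := by
      rcases smul_eq_zero.mp hvec with h | h
      · linarith
      · exact absurd h hune
    exact hab (by simp [ha, hb])
  -- Q u u = lam • u
  have h3b : (3 : ℝ) * b ≠ 0 := by simp [hbne]
  set lam : ℝ := (3 * b)⁻¹ * (-(2 * a)) with hlam
  have hQuu : Q u u = lam • u := by
    have h1 : (3 * b) • Q u u = (-(2 * a)) • u := by
      have hvec' : (3 * b) • Q u u + (2 * a) • u = 0 := by rw [add_comm]; exact hvec
      rw [neg_smul]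
      exact eq_neg_of_add_eq_zero_left hvec'
    have h2 := congrArg (fun v : E => (3 * b)⁻¹ • v) h1
    simp only [smul_smul, inv_mul_cancel₀ h3b, one_smul] at h2
    rw [hlam]
    exact h2
  have hlampos : 0 < lam := by
    have huu : ⟪u, u⟫_ℝ = 1 := by
      rw [real_inner_self_eq_norm_sq, hun]; norm_num
    have : ⟪Q u u, u⟫_ℝ = lam := by
      rw [hQuu, inner_smul_left]
      simp [huu, hun]
    linarith [hMpos, this]
  have hlamne : lam ≠ 0 := ne_of_gt hlampos
  refine ⟨lam⁻¹ • u, smul_ne_zero (inv_ne_zero hlamne) hune, ?_⟩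
  have : Q (lam⁻¹ • u) (lam⁻¹ • u) = (lam⁻¹ * (lam⁻¹ * lam)) • u := by
    simp only [map_smul, LinearMap.smul_apply, hQuu, smul_smul]
  rw [this]
  congr 1
  field_simp
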